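/- Let u⁺, u⁻, w, n ∈ ℝ² and suppose the jump of the normal component vanishes: (u⁺ − u⁻)·n = 0. Then ((u⁺ − u⁻)⊥ · n) · ((u⁺)⊥·w − (u⁻)⊥·w) = (w·n) · ‖u⁺ − u⁻‖², where ‖·‖ is the Euclidean norm. In the notation of jumps, with [u] := u⁺ − u⁻ and v continuous across the edge (v⁺ = v⁻ = w), this reads ([u⊥]·n)·[u⊥·v] = (w·n)·([u]·[u]). -/

import Mathlib

open scoped RealInnerProductSpace

/-- Clockwise rotation by π/2 of a vector in Euclidean ℝ²: `v⊥ = (v₂, −v₁)`. -/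
noncomputable def perp (v : EuclideanSpace ℝ (Fin 2)) : EuclideanSpace ℝ (Fin 2) :=
  (WithLp.equiv 2 (Fin 2 → ℝ)).symm ![v 1, -(v 0)]

/-- The pointwise jump identity underlying the Lie derivative stabilisation:
if the jump of the normal component vanishes, `([u⊥]·n)·[u⊥·v] = (w·n)·‖[u]‖²`
for a continuous test field `v⁺ = v⁻ = w`. -/
theorem jump_identity (up um w n : EuclideanSpace ℝ (Fin 2))
    (h : ⟪up - um, n⟫ = (0 : ℝ)) :
    ⟪perp (up - um), n⟫ * (⟪perp up, w⟫ - ⟪perp um, w⟫)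
      = ⟪w, n⟫ * ‖up - um‖ ^ 2 := by
  rw [← real_inner_self_eq_norm_sq]
  simp only [perp, PiLp.inner_apply, RCLike.inner_apply, conj_trivial, Fin.sum_univ_two,
    PiLp.sub_apply, WithLp.equiv_symm_apply, PiLp.toLp_apply, Matrix.cons_val_zero, Matrix.cons_val_one,
    Matrix.head_cons] at *
  linear_combination (-((up 0 - um 0) * w 0 + (up 1 - um 1) * w 1)) * h
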